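/- For any real q ≥ 2 and vectors u, v in R^d with ⟨u, v⟩ ≤ 0, it holds that ‖u - v‖^q ≥ ‖u‖^q + ‖v‖^q - q⟨u, v⟩‖u‖^{q-2}. -/

import Mathlib

open RealInnerProductSpace

/-- Bernoulli-type estimate: `(x+s)^p ≥ x^p + p s x^(p-1)` for `x > 0`, `s ≥ 0`, `p ≥ 1`. -/
lemma bern_aux (x s p : ℝ) (hx : 0 < x) (hs : 0 ≤ s) (hp : 1 ≤ p) :
    x ^ p + p * s * x ^ (p - 1) ≤ (x + s) ^ p := by
  have h1 : (-1 : ℝ) ≤ s / x := by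
    have := div_nonneg hs hx.le; linarith
  have h2 := one_add_mul_self_le_rpow_one_add h1 hp
  have hxp : (0 : ℝ) ≤ x ^ p := Real.rpow_nonneg hx.le p
  have key : (x + s) ^ p = x ^ p * (1 + s / x) ^ p := by
    rw [← Real.mul_rpow hx.le (by have := div_nonneg hs hx.le; linarith)]
    congr 1; field_simp
  have hx1 : x ^ (p - 1) = x ^ p / x := by
    rw [Real.rpow_sub hx, Real.rpow_one]
  rw [key, hx1]
  have h3 : x ^ p * (1 + p * (s / x)) ≤ x ^ p * (1 + s / x) ^ p :=
    mul_le_mul_of_nonneg_left h2 hxp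
  calc x ^ p + p * s * (x ^ p / x) = x ^ p * (1 + p * (s / x)) := by
        field_simp
    _ ≤ x ^ p * (1 + s / x) ^ p := h3

/-- Superadditivity of `fun x => x ^ p` for `p ≥ 1` on nonnegatives. -/
lemma sup_aux (x y p : ℝ) (hx : 0 ≤ x) (hy : 0 ≤ y) (hp : 1 ≤ p) :
    x ^ p + y ^ p ≤ (x + y) ^ p := by
  have hp0 : p ≠ 0 := by linarith
  have hp1 : 0 ≤ p - 1 := by linarith
  have hxy : 0 ≤ x + y := by linarith
  have hmul : ∀ z : ℝ, 0 ≤ z → z ^ p = z * z ^ (p - 1) := by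
    intro z hz
    rcases eq_or_lt_of_le hz with h | h
    · simp [← h, Real.zero_rpow hp0]
    · have h2 := Real.rpow_add h 1 (p - 1)
      rw [Real.rpow_one] at h2
      have h3 : 1 + (p - 1) = p := by ring
      rw [h3] at h2
      exact h2
  have hx' : x ^ (p - 1) ≤ (x + y) ^ (p - 1) :=
    Real.rpow_le_rpow hx (by linarith) hp1
  have hy' : y ^ (p - 1) ≤ (x + y) ^ (p - 1) :=
    Real.rpow_le_rpow hy (by linarith) hp1
  calc x ^ p + y ^ p = x * x ^ (p - 1) + y * y ^ (p - 1) := by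
        rw [hmul x hx, hmul y hy]
    _ ≤ x * (x + y) ^ (p - 1) + y * (x + y) ^ (p - 1) := by
        gcongr
    _ = (x + y) * (x + y) ^ (p - 1) := by ring
    _ = (x + y) ^ p := (hmul _ hxy).symm

theorem stmt6 (d : ℕ) (q : ℝ) (hq : 2 ≤ q) (u v : EuclideanSpace ℝ (Fin d))
    (huv : ⟪u, v⟫ ≤ 0) :
    ‖u - v‖ ^ q ≥ ‖u‖ ^ q + ‖v‖ ^ q - q * ⟪u, v⟫ * ‖u‖ ^ (q - 2) := by
  rcases eq_or_ne u 0 with hu | hu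
  · simp [hu, Real.zero_rpow (show q ≠ 0 by linarith)]
  · have ha : 0 < ‖u‖ := norm_pos_iff.2 hu
    have hb : 0 ≤ ‖v‖ := norm_nonneg v
    have hp : 1 ≤ q / 2 := by linarith
    have hc2 : ‖u - v‖ ^ 2 = (‖u‖ ^ 2 + ‖v‖ ^ 2) + -2 * ⟪u, v⟫ := by
      have := norm_sub_sq_real u v
      linarith
    have conv : ∀ z : ℝ, 0 ≤ z → ∀ r : ℝ, ((z ^ 2 : ℝ)) ^ r = z ^ (2 * r) := by
      intro z hz r
      rw [← Real.rpow_natCast z 2, ← Real.rpow_mul hz]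
      norm_num
    have key1 := bern_aux (‖u‖ ^ 2 + ‖v‖ ^ 2) (-2 * ⟪u, v⟫) (q / 2)
      (by positivity) (by linarith) hp
    have key2 := sup_aux (‖u‖ ^ 2) (‖v‖ ^ 2) (q / 2) (by positivity) (by positivity) hp
    have key3 : ((‖u‖ ^ 2 : ℝ)) ^ (q / 2 - 1) ≤ ((‖u‖ ^ 2 + ‖v‖ ^ 2 : ℝ)) ^ (q / 2 - 1) :=
      Real.rpow_le_rpow (by positivity) (by nlinarith) (by linarith)
    have hcoef : 0 ≤ q / 2 * (-2 * ⟪u, v⟫) := by nlinarith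
    have k4 := mul_le_mul_of_nonneg_left key3 hcoef
    have e1 : ((‖u - v‖ ^ 2 : ℝ)) ^ (q / 2) = ‖u - v‖ ^ q := by
      rw [conv _ (norm_nonneg _)]; congr 1; ring
    have e2 : ((‖u‖ ^ 2 : ℝ)) ^ (q / 2) = ‖u‖ ^ q := by
      rw [conv _ (norm_nonneg _)]; congr 1; ring
    have e3 : ((‖v‖ ^ 2 : ℝ)) ^ (q / 2) = ‖v‖ ^ q := by
      rw [conv _ (norm_nonneg _)]; congr 1; ring
    have e4 : ((‖u‖ ^ 2 : ℝ)) ^ (q / 2 - 1) = ‖u‖ ^ (q - 2) := by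
      rw [conv _ (norm_nonneg _)]; congr 1; ring
    rw [e2, e3] at key2
    rw [e4] at k4
    have hring : q * ⟪u, v⟫ * ‖u‖ ^ (q - 2) =
        -(q / 2 * (-2 * ⟪u, v⟫) * ‖u‖ ^ (q - 2)) := by ring
    rw [ge_iff_le, hring, ← e1, hc2]
    linarith [key1, key2, k4]
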